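/- With K^j_n = L_n(δ_j) as above, for all n ≥ 0 and 0 ≤ j ≤ n one has 0 ≤ K^j_n · K^0_j ≤ K^0_n. -/
import Mathlib


open Finset

theorem stmt_8 (m : ℕ) (hm : 1 ≤ m) (b p : Fin m → ℝ)
    (hb : ∀ i, 0 ≤ b i) (hp : ∀ i, p i ∈ Set.Ioo (0 : ℝ) 1)
    (K : ℕ → ℕ → ℝ)
    (hK0 : ∀ j, K j 0 = if (0 : ℕ) = j then 1 else 0)
    (hKrec : ∀ j, ∀ n : ℕ, 1 ≤ n →
      K j n = (if n = j then 1 else 0) + ∑ i, b i * K j ⌊p i * n⌋₊)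
    (hKpos : ∀ j, 0 < K 0 j) :
    ∀ n j : ℕ, j ≤ n → 0 ≤ K j n * K 0 j ∧ K j n * K 0 j ≤ K 0 n := by
  have hfloor : ∀ (i : Fin m) (n : ℕ), 1 ≤ n → ⌊p i * n⌋₊ < n := by
    intro i n hn
    have h1 := (hp i).1
    have h2 := (hp i).2
    have hn' : (0:ℝ) < n := by exact_mod_cast hn
    rw [Nat.floor_lt (le_of_lt (mul_pos h1 hn'))]
    nlinarith
  have hnonneg : ∀ n j, 0 ≤ K j n := by
    intro n
    induction n using Nat.strong_induction_on with
    | _ n ih =>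
      intro j
      rcases Nat.eq_zero_or_pos n with h | h
      · subst h; rw [hK0]; split <;> norm_num
      · rw [hKrec j n h]
        have hs : 0 ≤ ∑ i, b i * K j ⌊p i * n⌋₊ :=
          Finset.sum_nonneg fun i _ => mul_nonneg (hb i) (ih _ (hfloor i n h) j)
        split <;> linarith
  have hzero : ∀ n j, n < j → K j n = 0 := by
    intro n
    induction n using Nat.strong_induction_on with
    | _ n ih =>
      intro j hj
      rcases Nat.eq_zero_or_pos n with h | h
      · subst h; rw [hK0, if_neg (by omega)]
      · rw [hKrec j n h, if_neg (by omega), Finset.sum_eq_zero, add_zero]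
        intro i _
        rw [ih _ (hfloor i n h) j (lt_trans (hfloor i n h) hj), mul_zero]
  intro n
  induction n using Nat.strong_induction_on with
  | _ n ih =>
    intro j hjn
    refine ⟨mul_nonneg (hnonneg n j) (hKpos j).le, ?_⟩
    rcases Nat.eq_zero_or_pos n with h | h
    · subst h
      interval_cases j
      simp [hK0]
    · have hK0n : K 0 n = ∑ i, b i * K 0 ⌊p i * n⌋₊ := by
        rw [hKrec 0 n h, if_neg (by omega), zero_add]
      rcases eq_or_ne n j with rfl | hne
      · have hKn : K n n = 1 := by
          rw [hKrec n n h, if_pos rfl, Finset.sum_eq_zero, add_zero]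
          intro i _
          rw [hzero _ _ (hfloor i n h), mul_zero]
        rw [hKn, one_mul]
      · rw [hKrec j n h, if_neg hne, zero_add, hK0n, Finset.sum_mul]
        apply Finset.sum_le_sum
        intro i _
        rw [mul_assoc]
        apply mul_le_mul_of_nonneg_left _ (hb i)
        rcases le_or_gt j ⌊p i * n⌋₊ with hle | hlt
        · exact (ih _ (hfloor i n h) j hle).2
        · rw [hzero _ _ hlt, zero_mul]
          exact (hKpos _).le
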